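/- Under Assumption A, let {x^k} with parameters {γ_k} be generated by the monotone proximal gradient method, let {x^k}_{k∈K} be a subsequence converging to some point x*, and assume that ∇f : 𝕏 → 𝕏 is locally Lipschitz continuous around x*. Then the subsequence {γ_k}_{k∈K} is bounded. (Corollary 3.5.) -/

import Mathlib

open Filter Topology RealInnerProductSpace

noncomputable section

variable {E : Type*} [NormedAddCommGroup E] [InnerProductSpace ℝ E] [FiniteDimensional ℝ E]

/-- The objective `ψ = f + φ`, with values in `EReal`. -/
def psi (f : E → ℝ) (φ : E → EReal) (x : E) : EReal :=
  (f x : EReal) + φ x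

/-- `φ` is bounded from below by an affine function. -/
def AffineBoundedBelow (φ : E → EReal) : Prop :=
  ∃ (a : E) (b : ℝ), ∀ x : E, ((⟪a, x⟫ + b : ℝ) : EReal) ≤ φ x

/-- Objective of the proximal subproblem at `xb` with parameter `γ`. -/
def proxObj (f : E → ℝ) (φ : E → EReal) (xb : E) (γ : ℝ) (x : E) : EReal :=
  ((f xb + ⟪gradient f xb, x - xb⟫ + γ / 2 * ‖x - xb‖ ^ 2 : ℝ) : EReal) + φ x

/-- `x` is a global minimizer of the proximal subproblem at `xb` with parameter `γ`. -/
def IsProxMin (f : E → ℝ) (φ : E → EReal) (xb : E) (γ : ℝ) (x : E) : Prop :=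
  ∀ y : E, proxObj f φ xb γ x ≤ proxObj f φ xb γ y

/-- Fréchet (regular) subdifferential of `φ` at `x`. -/
def FrechetSubdiff (φ : E → EReal) (x : E) : Set E :=
  {η : E | ∀ ε : ℝ, 0 < ε →
    ∀ᶠ y in 𝓝[≠] x, φ x + ((⟪η, y - x⟫ - ε * ‖y - x‖ : ℝ) : EReal) ≤ φ y}

/-- Limiting (Mordukhovich) subdifferential of `φ` at `x`. -/
def LimitingSubdiff (φ : E → EReal) (x : E) : Set E :=
  {η : E | ∃ u v : ℕ → E,
    Tendsto u atTop (𝓝 x) ∧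
    Tendsto (fun j => φ (u j)) atTop (𝓝 (φ x)) ∧
    Tendsto v atTop (𝓝 η) ∧
    ∀ j : ℕ, v j ∈ FrechetSubdiff φ (u j)}

/-- `x` is an M-stationary point of `min f + φ`. -/
def MStationary (f : E → ℝ) (φ : E → EReal) (x : E) : Prop :=
  φ x ≠ ⊤ ∧ -gradient f x ∈ LimitingSubdiff φ x

/-- `ψ` is bounded from below on `dom φ`. -/
def PsiBddBelow (f : E → ℝ) (φ : E → EReal) : Prop :=
  ∃ c : ℝ, ∀ z : E, φ z ≠ ⊤ → (c : EReal) ≤ psi f φ z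

/-- The monotone proximal gradient method (Algorithm 3.1). -/
structure MonoPG (f : E → ℝ) (φ : E → EReal) (τ γmin γmax δ : ℝ)
    (x : ℕ → E) (γ : ℕ → ℝ) : Prop where
  dom : ∀ k : ℕ, φ (x k) ≠ ⊤
  stepsize : ∀ k : ℕ, ∃ γ0 : ℝ, ∃ i : ℕ, γ0 ∈ Set.Icc γmin γmax ∧ γ k = τ ^ i * γ0 ∧
    (1 ≤ i → ∃ xh : E, IsProxMin f φ (x k) (γ k / τ) xh ∧
      psi f φ (x k) < psi f φ xh + ((δ * (γ k / τ) / 2 * ‖xh - x k‖ ^ 2 : ℝ) : EReal))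
  isMin : ∀ k : ℕ, IsProxMin f φ (x k) (γ k) (x (k + 1))
  accept : ∀ k : ℕ,
    psi f φ (x (k + 1)) + ((δ * γ k / 2 * ‖x (k + 1) - x k‖ ^ 2 : ℝ) : EReal) ≤ psi f φ (x k)

/-- The nonmonotone reference value `max_{j=0,…,min{k,m}} ψ(x^{k-j})`. -/
def nmax (f : E → ℝ) (φ : E → EReal) (x : ℕ → E) (m k : ℕ) : EReal :=
  (Finset.range (min k m + 1)).sup fun j => psi f φ (x (k - j))

/-- The nonmonotone proximal gradient method (Algorithm 4.1). -/
structure NonmonoPG (f : E → ℝ) (φ : E → EReal) (τ γmin γmax δ : ℝ) (m : ℕ)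
    (x : ℕ → E) (γ : ℕ → ℝ) : Prop where
  dom : ∀ k : ℕ, φ (x k) ≠ ⊤
  stepsize : ∀ k : ℕ, ∃ γ0 : ℝ, ∃ i : ℕ, γ0 ∈ Set.Icc γmin γmax ∧ γ k = τ ^ i * γ0 ∧
    (1 ≤ i → ∃ xh : E, IsProxMin f φ (x k) (γ k / τ) xh ∧
      nmax f φ x m k < psi f φ xh + ((δ * (γ k / τ) / 2 * ‖xh - x k‖ ^ 2 : ℝ) : EReal))
  isMin : ∀ k : ℕ, IsProxMin f φ (x k) (γ k) (x (k + 1))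
  accept : ∀ k : ℕ,
    psi f φ (x (k + 1)) + ((δ * γ k / 2 * ‖x (k + 1) - x k‖ ^ 2 : ℝ) : EReal) ≤ nmax f φ x m k

/-- `l` realizes the nonmonotone maximum `ψ(x^{l(k)}) = max_{j=0,…,m_k} ψ(x^{k-j})`,
with `l k ∈ {k - m_k, …, k}`. -/
def RealizesNMax (f : E → ℝ) (φ : E → EReal) (x : ℕ → E) (m : ℕ) (l : ℕ → ℕ) : Prop :=
  ∀ k : ℕ, k - min k m ≤ l k ∧ l k ≤ k ∧ psi f φ (x (l k)) = nmax f φ x m k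

/-- `ψ` is uniformly continuous on the sublevel set `L_ψ(x⁰)`. -/
def UnifContOnLevelSet (f : E → ℝ) (φ : E → EReal) (x0 : E) : Prop :=
  ∀ ε : ℝ, 0 < ε → ∃ η : ℝ, 0 < η ∧ ∀ u v : E,
    psi f φ u ≤ psi f φ x0 → psi f φ v ≤ psi f φ x0 → ‖u - v‖ ≤ η →
    psi f φ u ≤ psi f φ v + (ε : EReal)

/-- `φ` is continuous on its domain `dom φ`. -/
def ContOnDom (φ : E → EReal) : Prop :=
  ∀ x : E, φ x ≠ ⊤ → ∀ y : ℕ → E, (∀ j : ℕ, φ (y j) ≠ ⊤) →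
    Tendsto y atTop (𝓝 x) → Tendsto (fun j => φ (y j)) atTop (𝓝 (φ x))

lemma descent_aux (f : E → ℝ) (hf : ContDiff ℝ 1 f) {L : ℝ} (hL0 : 0 ≤ L) {U : Set E}
    (hUlip : ∀ u ∈ U, ∀ v ∈ U, ‖gradient f u - gradient f v‖ ≤ L * ‖u - v‖)
    {p q : E} (hseg : segment ℝ p q ⊆ U) :
    f q ≤ f p + ⟪gradient f p, q - p⟫ + L * ‖q - p‖ ^ 2 := by
  have hdiff : Differentiable ℝ f := hf.differentiable one_ne_zero
  set D : E → E →L[ℝ] ℝ := fun y => fderiv ℝ f y - InnerProductSpace.toDual ℝ E (gradient f p)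
    with hD
  have hfd : ∀ y ∈ segment ℝ p q,
      HasFDerivWithinAt (fun y => f y - ⟪gradient f p, y⟫) (D y) (segment ℝ p q) y := by
    intro y hy
    have h1 : HasFDerivAt f (fderiv ℝ f y) y := (hdiff y).hasFDerivAt
    have h2 : HasFDerivAt (fun y => ⟪gradient f p, y⟫)
        (InnerProductSpace.toDual ℝ E (gradient f p)) y := by
      have := (InnerProductSpace.toDual ℝ E (gradient f p)).hasFDerivAt (x := y)
      simpa [InnerProductSpace.toDual_apply_apply] using this
    exact ((h1.sub h2)).hasFDerivWithinAt
  have htoDual : InnerProductSpace.toDual ℝ E (gradient f p) = fderiv ℝ f p := by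
    simp [gradient]
  have hbound : ∀ y ∈ segment ℝ p q, ‖D y‖ ≤ L * ‖q - p‖ := by
    intro y hy
    rw [segment_eq_image'] at hy
    obtain ⟨t, ht, rfl⟩ := hy
    have h1 : ‖D (p + t • (q - p))‖ = ‖gradient f (p + t • (q - p)) - gradient f p‖ := by
      rw [hD, htoDual]
      simp only []
      rw [show gradient f (p + t • (q - p)) - gradient f p
          = (InnerProductSpace.toDual ℝ E).symm (fderiv ℝ f (p + t • (q - p)) - fderiv ℝ f p) by
        simp [gradient, map_sub]]
      rw [LinearIsometryEquiv.norm_map]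
    rw [h1]
    have h2 : p + t • (q - p) ∈ U := hseg (by rw [segment_eq_image']; exact ⟨t, ht, rfl⟩)
    have h3 : p ∈ U := hseg (left_mem_segment ℝ p q)
    calc ‖gradient f (p + t • (q - p)) - gradient f p‖ ≤ L * ‖p + t • (q - p) - p‖ :=
          hUlip _ h2 _ h3
      _ ≤ L * ‖q - p‖ := by
          have : ‖p + t • (q - p) - p‖ = t * ‖q - p‖ := by
            rw [show p + t • (q - p) - p = t • (q - p) by abel, norm_smul,
              Real.norm_eq_abs, abs_of_nonneg ht.1]
          rw [this]
          calc L * (t * ‖q - p‖) = t * (L * ‖q - p‖) := by ring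
            _ ≤ 1 * (L * ‖q - p‖) :=
                mul_le_mul_of_nonneg_right ht.2 (mul_nonneg hL0 (norm_nonneg _))
            _ = L * ‖q - p‖ := one_mul _
  have key := (convex_segment p q).norm_image_sub_le_of_norm_hasFDerivWithin_le hfd hbound
    (left_mem_segment ℝ p q) (right_mem_segment ℝ p q)
  have : f q - ⟪gradient f p, q⟫ - (f p - ⟪gradient f p, p⟫) ≤ L * ‖q - p‖ * ‖q - p‖ :=
    le_trans (le_abs_self _) (by simpa [Real.norm_eq_abs] using key)
  have hinner : ⟪gradient f p, q - p⟫ = ⟪gradient f p, q⟫ - ⟪gradient f p, p⟫ :=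
    inner_sub_right _ _ _
  nlinarith [this, hinner]

lemma prox_center {f : E → ℝ} {φ : E → EReal} (hbot : ∀ z : E, φ z ≠ ⊥)
    {xb xh : E} {g : ℝ} (hmin : IsProxMin f φ xb g xh) (hxb : φ xb ≠ ⊤) :
    φ xh ≠ ⊤ ∧
      ⟪gradient f xb, xh - xb⟫ + g / 2 * ‖xh - xb‖ ^ 2 + (φ xh).toReal ≤ (φ xb).toReal := by
  have h := hmin xb
  simp only [proxObj, sub_self, inner_zero_right, norm_zero] at h
  rw [← EReal.coe_toReal hxb (hbot xb)] at h
  have hT : φ xh ≠ ⊤ := by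
    intro hT
    rw [hT] at h
    rw [EReal.add_top_of_ne_bot (EReal.coe_ne_bot _)] at h
    rw [← EReal.coe_add] at h
    exact (EReal.coe_ne_top _) (top_le_iff.1 h)
  refine ⟨hT, ?_⟩
  rw [← EReal.coe_toReal hT (hbot xh), ← EReal.coe_add, ← EReal.coe_add,
    EReal.coe_le_coe_iff] at h
  nlinarith [h]

lemma psi_eq {f : E → ℝ} {φ : E → EReal} (hbot : ∀ z : E, φ z ≠ ⊥) {z : E} (h : φ z ≠ ⊤) :
    psi f φ z = ((f z + (φ z).toReal : ℝ) : EReal) := by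
  show (f z : EReal) + φ z = _
  rw [EReal.coe_add]
  congr 1
  exact (EReal.coe_toReal h (hbot z)).symm

lemma quad_bound {g t ε c1 c2 : ℝ} (hε : 0 < ε) (hc1 : 0 ≤ c1) (hc2 : 0 ≤ c2)
    (hq : g / 2 * t ^ 2 ≤ c1 * t + c2) (hte : ε < t) :
    g ≤ 2 * (c1 / ε + c2 / ε ^ 2) := by
  have ht0 : 0 < t := lt_trans hε hte
  have e1 : c1 * t ≤ c1 / ε * t ^ 2 := by
    rw [div_mul_eq_mul_div, le_div_iff₀ hε]
    nlinarith [mul_nonneg hc1 ht0.le]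
  have e2 : c2 ≤ c2 / ε ^ 2 * t ^ 2 := by
    rw [div_mul_eq_mul_div, le_div_iff₀ (by positivity : (0:ℝ) < ε ^ 2)]
    nlinarith [mul_le_mul_of_nonneg_left (by nlinarith : ε ^ 2 ≤ t ^ 2) hc2]
  have e3 : g / 2 * t ^ 2 ≤ (c1 / ε + c2 / ε ^ 2) * t ^ 2 := by
    calc g / 2 * t ^ 2 ≤ c1 * t + c2 := hq
      _ ≤ c1 / ε * t ^ 2 + c2 / ε ^ 2 * t ^ 2 := add_le_add e1 e2
      _ = (c1 / ε + c2 / ε ^ 2) * t ^ 2 := by ring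
  have ht2 : 0 < t ^ 2 := by positivity
  have := le_of_mul_le_mul_right (by linarith [e3] : g / 2 * t ^ 2 ≤ (c1 / ε + c2 / ε ^ 2) * t ^ 2) ht2
  linarith [mul_le_mul_of_nonneg_right this (le_of_lt ht2), this]

lemma final_contra {fk Pk fh Ph inn g L δ t : ℝ}
    (hkey : inn + g / 2 * t ^ 2 + Ph ≤ Pk)
    (hdes : fh ≤ fk + inn + L * t ^ 2)
    (hfail : fk + Pk < fh + Ph + δ * g / 2 * t ^ 2)
    (hLd : L ≤ (1 - δ) * g / 2) : False := by
  nlinarith [mul_nonpos_of_nonpos_of_nonneg (by linarith : L - (1 - δ) * g / 2 ≤ 0) (sq_nonneg t)]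


set_option maxHeartbeats 1000000 in
/-- Corollary 3.5: under Assumption A, if a subsequence `x^k`, `k ∈ K`, of iterates of the
monotone proximal gradient method converges to `xstar` and `∇f` is locally Lipschitz
around `xstar`, then the subsequence `{γ_k}_{k ∈ K}` is bounded. -/
theorem stmt_9
    (f : E → ℝ) (φ : E → EReal) (hf : ContDiff ℝ 1 f)
    (hbot : ∀ z : E, φ z ≠ ⊥) (hlsc : LowerSemicontinuous φ)
    (τ γmin γmax δ : ℝ) (hτ : 1 < τ) (hγmin : 0 < γmin) (hγmm : γmin ≤ γmax)
    (hδ : δ ∈ Set.Ioo (0 : ℝ) 1)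
    (x : ℕ → E) (γ : ℕ → ℝ)
    (hpsibdd : PsiBddBelow f φ) (haff : AffineBoundedBelow φ)
    (hM : MonoPG f φ τ γmin γmax δ x γ)
    (K : ℕ → ℕ) (hK : StrictMono K) (xstar : E)
    (hconv : Tendsto (fun n => x (K n)) atTop (𝓝 xstar))
    (hlip : ∃ L : ℝ, 0 < L ∧ ∃ U ∈ 𝓝 xstar, ∀ u ∈ U, ∀ v ∈ U,
      ‖gradient f u - gradient f v‖ ≤ L * ‖u - v‖) :
    ∃ C : ℝ, ∀ n : ℕ, γ (K n) ≤ C := by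
  rw [AffineBoundedBelow] at haff
  obtain ⟨hδ0, hδ1⟩ := hδ
  obtain ⟨L, hL, U, hU, hUlip⟩ := hlip
  obtain ⟨a, b, haff⟩ := haff
  have hτ0 : (0:ℝ) < τ := lt_trans one_pos hτ
  have hγpos : ∀ k, 0 < γ k := by
    intro k
    obtain ⟨γ0, i, hmem, heq, -⟩ := hM.stepsize k
    have h1 : (0:ℝ) < τ ^ i := pow_pos hτ0 i
    have h0 : 0 < γ0 := lt_of_lt_of_le hγmin hmem.1
    rw [heq]; positivity
  have hψeq : ∀ k, psi f φ (x k) = ((f (x k) + (φ (x k)).toReal : ℝ) : EReal) :=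
    fun k => psi_eq hbot (hM.dom k)
  have hmono : ∀ k, f (x (k+1)) + (φ (x (k+1))).toReal ≤ f (x k) + (φ (x k)).toReal := by
    intro k
    have h := hM.accept k
    rw [hψeq, hψeq, ← EReal.coe_add, EReal.coe_le_coe_iff] at h
    have hnn : 0 ≤ δ * γ k / 2 * ‖x (k+1) - x k‖ ^ 2 := by
      have := hγpos k
      positivity
    linarith
  have hΨ0 : ∀ k, f (x k) + (φ (x k)).toReal ≤ f (x 0) + (φ (x 0)).toReal := fun k =>
    antitone_nat_of_succ_le (f := fun k => f (x k) + (φ (x k)).toReal) hmono (Nat.zero_le k)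
  have haffR : ∀ z : E, φ z ≠ ⊤ → ⟪a, z⟫ + b ≤ (φ z).toReal := by
    intro z hz
    have h := haff z
    rw [← EReal.coe_toReal hz (hbot z), EReal.coe_le_coe_iff] at h
    exact h
  obtain ⟨r, hr, hball⟩ := Metric.nhds_basis_closedBall.mem_iff.1 hU
  have hgradcont : Continuous fun z : E => gradient f z := by
    have h1 : Continuous (fderiv ℝ f) := hf.continuous_fderiv one_ne_zero
    exact (InnerProductSpace.toDual ℝ E).symm.continuous.comp h1
  obtain ⟨G, hG⟩ : ∃ y : ℝ, y = ‖gradient f xstar‖ + 1 := ⟨_, rfl⟩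
  have h1 : ∀ᶠ n in atTop, ‖x (K n) - xstar‖ ≤ min 1 (r/2) := by
    obtain ⟨N, hN⟩ := Metric.tendsto_atTop.1 hconv (min 1 (r/2)) (by positivity)
    exact eventually_atTop.2 ⟨N, fun n hn => by
      have := hN n hn; rw [dist_eq_norm] at this; linarith⟩
  have h2 : ∀ᶠ n in atTop, ‖gradient f (x (K n))‖ ≤ G := by
    have hg : Tendsto (fun n => gradient f (x (K n))) atTop (𝓝 (gradient f xstar)) :=
      (hgradcont.tendsto xstar).comp hconv
    obtain ⟨N, hN⟩ := Metric.tendsto_atTop.1 hg 1 one_pos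
    exact eventually_atTop.2 ⟨N, fun n hn => by
      have h := hN n hn; rw [dist_eq_norm] at h
      have := norm_sub_norm_le (gradient f (x (K n))) (gradient f xstar)
      rw [hG]; linarith⟩
  have h3 : ∀ᶠ n in atTop, f xstar - 1 ≤ f (x (K n)) := by
    have hg : Tendsto (fun n => f (x (K n))) atTop (𝓝 (f xstar)) :=
      (hf.continuous.tendsto xstar).comp hconv
    obtain ⟨N, hN⟩ := Metric.tendsto_atTop.1 hg 1 one_pos
    exact eventually_atTop.2 ⟨N, fun n hn => by
      have h := hN n hn; rw [Real.dist_eq, abs_lt] at h; linarith⟩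
  obtain ⟨N, hN⟩ := eventually_atTop.1 (h1.and (h2.and h3))
  have hGpos : 0 < G := by rw [hG]; positivity
  obtain ⟨R, hR⟩ : ∃ y : ℝ, y = ‖xstar‖ + 1 := ⟨_, rfl⟩
  obtain ⟨B, hB⟩ : ∃ y : ℝ, y = f (x 0) + (φ (x 0)).toReal - f xstar + 1 := ⟨_, rfl⟩
  obtain ⟨c1, hc1⟩ : ∃ y : ℝ, y = G + ‖a‖ := ⟨_, rfl⟩
  obtain ⟨c2, hc2⟩ : ∃ y : ℝ, y = |B| + ‖a‖ * R + |b| := ⟨_, rfl⟩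
  have hRpos : 0 ≤ R := by rw [hR]; positivity
  have hc1pos : 0 ≤ c1 := by rw [hc1]; positivity
  have hc2pos : 0 ≤ c2 := by
    rw [hc2]
    have : 0 ≤ ‖a‖ * R := mul_nonneg (norm_nonneg a) hRpos
    positivity
  obtain ⟨ε, hε⟩ : ∃ y : ℝ, y = r / 2 := ⟨_, rfl⟩
  have hεpos : 0 < ε := by rw [hε]; positivity
  obtain ⟨Γ, hΓ⟩ : ∃ y : ℝ, y = 2 * (c1 / ε + c2 / ε ^ 2) := ⟨_, rfl⟩
  obtain ⟨Mth, hMth⟩ : ∃ y : ℝ, y = max γmax (max Γ (2 * L / (1 - δ))) := ⟨_, rfl⟩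
  have hMthpos : 0 < Mth := by
    rw [hMth]
    exact lt_of_lt_of_le (lt_of_lt_of_le hγmin hγmm) (le_max_left _ _)
  have hMγmax : γmax ≤ Mth := by rw [hMth]; exact le_max_left _ _
  have hMΓ : Γ ≤ Mth := by rw [hMth]; exact le_trans (le_max_left _ _) (le_max_right _ _)
  have hML : 2 * L / (1 - δ) ≤ Mth := by
    rw [hMth]; exact le_trans (le_max_right _ _) (le_max_right _ _)
  obtain ⟨C0, hC0⟩ : ∃ y : ℝ, y = τ * Mth := ⟨_, rfl⟩
  have hbnd : ∀ n, N ≤ n → γ (K n) ≤ C0 := by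
    intro n hn
    by_contra hcon
    push_neg at hcon
    rw [hC0] at hcon
    obtain ⟨hnear, hgrad, hfval⟩ := hN n hn
    obtain ⟨γ0, i, hmem, heq, hbt⟩ := hM.stepsize (K n)
    have hi : 1 ≤ i := by
      by_contra hi0
      push_neg at hi0
      interval_cases i
      · rw [heq, pow_zero, one_mul] at hcon
        have h' : γ0 ≤ γmax := hmem.2
        nlinarith
    obtain ⟨xh, hxhmin, hxhfail⟩ := hbt hi
    have hγh : Mth < γ (K n) / τ := by
      rw [lt_div_iff₀ hτ0]
      nlinarith
    have hγhpos : 0 < γ (K n) / τ := lt_trans hMthpos hγh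
    obtain ⟨hxhT, hkey⟩ := prox_center hbot hxhmin (hM.dom (K n))
    have htpos : (0:ℝ) ≤ ‖xh - x (K n)‖ := norm_nonneg _
    have hΦb : (φ (x (K n))).toReal ≤ B := by
      have h := hΨ0 (K n)
      rw [hB]; linarith
    have hxknorm : ‖x (K n)‖ ≤ R := by
      have h0 := norm_sub_norm_le (x (K n)) xstar
      have h1' : ‖x (K n) - xstar‖ ≤ 1 := le_trans hnear (min_le_left _ _)
      rw [hR]; linarith
    have hinnerG : -(G * ‖xh - x (K n)‖) ≤ ⟪gradient f (x (K n)), xh - x (K n)⟫ := by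
      have h := abs_real_inner_le_norm (gradient f (x (K n))) (xh - x (K n))
      have h2' : ‖gradient f (x (K n))‖ * ‖xh - x (K n)‖ ≤ G * ‖xh - x (K n)‖ :=
        mul_le_mul_of_nonneg_right hgrad htpos
      rw [abs_le] at h
      linarith [h.1]
    have hinnerA : -(‖a‖ * ‖xh - x (K n)‖) ≤ ⟪a, xh - x (K n)⟫ := by
      have h := abs_real_inner_le_norm a (xh - x (K n))
      rw [abs_le] at h
      linarith [h.1]
    have hinnerA2 : -(‖a‖ * R) ≤ ⟪a, x (K n)⟫ := by
      have h := abs_real_inner_le_norm a (x (K n))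
      have h2' : ‖a‖ * ‖x (K n)‖ ≤ ‖a‖ * R := mul_le_mul_of_nonneg_left hxknorm (norm_nonneg a)
      rw [abs_le] at h
      linarith [h.1]
    have hΦxh : ⟪a, x (K n)⟫ + ⟪a, xh - x (K n)⟫ + b ≤ (φ xh).toReal := by
      have h := haffR xh hxhT
      have he : ⟪a, xh⟫ = ⟪a, x (K n)⟫ + ⟪a, xh - x (K n)⟫ := by
        rw [← inner_add_right]
        congr 1
        abel
      linarith
    have hquad : γ (K n) / τ / 2 * ‖xh - x (K n)‖ ^ 2 ≤ c1 * ‖xh - x (K n)‖ + c2 := by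
      have hb' : -|b| ≤ b := neg_abs_le b
      have hBb : B ≤ |B| := le_abs_self B
      rw [hc1, hc2]
      have hGa : -((G + ‖a‖) * ‖xh - x (K n)‖)
          ≤ ⟪gradient f (x (K n)), xh - x (K n)⟫ + ⟪a, xh - x (K n)⟫ := by
        have : -((G + ‖a‖) * ‖xh - x (K n)‖)
            = -(G * ‖xh - x (K n)‖) + -(‖a‖ * ‖xh - x (K n)‖) := by ring
        rw [this]
        exact add_le_add hinnerG hinnerA
      linarith [hkey, hΦxh, hΦb, hinnerA2]
    have htε : ‖xh - x (K n)‖ ≤ ε := by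
      by_contra hte
      push_neg at hte
      have := quad_bound hεpos hc1pos hc2pos hquad hte
      rw [← hΓ] at this
      linarith [hγh, hMΓ]
    have hxkball : x (K n) ∈ Metric.closedBall xstar r := by
      rw [Metric.mem_closedBall, dist_eq_norm]
      have h2' := le_trans hnear (min_le_right _ _)
      linarith
    have hxhball : xh ∈ Metric.closedBall xstar r := by
      rw [Metric.mem_closedBall, dist_eq_norm]
      have h1' : ‖xh - xstar‖ ≤ ‖xh - x (K n)‖ + ‖x (K n) - xstar‖ :=
        norm_sub_le_norm_sub_add_norm_sub xh (x (K n)) xstar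
      have h2' : ‖x (K n) - xstar‖ ≤ r / 2 := le_trans hnear (min_le_right _ _)
      rw [hε] at htε
      linarith
    have hsub : segment ℝ (x (K n)) xh ⊆ U :=
      subset_trans ((convex_closedBall xstar r).segment_subset hxkball hxhball) hball
    have hdes := descent_aux f hf (le_of_lt hL) hUlip hsub
    have hfail : f (x (K n)) + (φ (x (K n))).toReal
        < f xh + (φ xh).toReal + δ * (γ (K n) / τ) / 2 * ‖xh - x (K n)‖ ^ 2 := by
      have h := hxhfail
      rw [hψeq (K n), psi_eq hbot hxhT, ← EReal.coe_add, EReal.coe_lt_coe_iff] at h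
      linarith
    have hLd : L ≤ (1 - δ) * (γ (K n) / τ) / 2 := by
      have h1δ : (0:ℝ) < 1 - δ := by linarith
      have := le_trans hML (le_of_lt hγh)
      rw [div_le_iff₀ h1δ] at this
      linarith
    exact final_contra hkey hdes hfail hLd
  have hfin : ∃ C1 : ℝ, ∀ n, n < N → γ (K n) ≤ C1 := by
    clear hbnd hN
    induction N with
    | zero => exact ⟨0, fun n hn => absurd hn (Nat.not_lt_zero n)⟩
    | succ N ih =>
      obtain ⟨C1, hC1⟩ := ih
      refine ⟨max C1 (γ (K N)), fun n hn => ?_⟩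
      rcases Nat.lt_succ_iff_lt_or_eq.1 hn with h | h
      · exact le_trans (hC1 n h) (le_max_left _ _)
      · subst h; exact le_max_right _ _
  obtain ⟨C1, hC1⟩ := hfin
  refine ⟨max C0 C1, fun n => ?_⟩
  rcases lt_or_ge n N with h | h
  · exact le_trans (hC1 n h) (le_max_right _ _)
  · exact le_trans (hbnd n h) (le_max_left _ _)
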